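/- For every positive integer m, the coefficient of z^m in H(z)^{2m+1} equals 1, where H(z) = C(z)/S(z) with C(z) = Σ_{k≥0} z^k/(2k)! and S(z) = Σ_{k≥0} z^k/(2k+1)!. -/

import Mathlib

open PowerSeries

noncomputable def Cser : PowerSeries ℚ := PowerSeries.mk fun k => 1 / (2 * k).factorial

noncomputable def Sser : PowerSeries ℚ := PowerSeries.mk fun k => 1 / (2 * k + 1).factorial

noncomputable def Hser : PowerSeries ℚ := Cser * Sser⁻¹

lemma coeff_Cser (n : ℕ) : coeff n Cser = 1 / (2 * n).factorial := coeff_mk _ _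

lemma coeff_Sser (n : ℕ) : coeff n Sser = 1 / (2 * n + 1).factorial := coeff_mk _ _

lemma constCoeff_Sser : constantCoeff Sser = 1 := by
  rw [← coeff_zero_eq_constantCoeff, coeff_Sser]; norm_num

lemma constCoeff_Cser : constantCoeff Cser = 1 := by
  rw [← coeff_zero_eq_constantCoeff, coeff_Cser]; norm_num

lemma constCoeff_Sser_ne : constantCoeff Sser ≠ 0 := by rw [constCoeff_Sser]; norm_num

lemma Sser_inv_mul : Sser⁻¹ * Sser = 1 := PowerSeries.inv_mul_cancel _ constCoeff_Sser_ne

lemma hSder : 2 * X * (d⁄dX ℚ Sser) = Cser - Sser := by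
  ext n
  rw [map_sub, coeff_Cser, coeff_Sser]
  rcases n with _ | n
  · rw [coeff_zero_eq_constantCoeff, map_mul, map_mul, constantCoeff_X]
    norm_num
  · rw [show (2 : ℚ⟦X⟧) * X = X * 2 by ring, mul_assoc, coeff_succ_X_mul, two_mul, map_add,
      coeff_derivative, coeff_Sser]
    have h0 : (2*(n+1)+1).factorial = (2*(n+1)+1) * (2*(n+1)).factorial := by
      rw [show 2*(n+1)+1 = (2*(n+1)) + 1 by ring, Nat.factorial_succ]
    have h1 : ((2*(n+1)+1).factorial : ℚ) = (2*(n+1)+1) * (2*(n+1)).factorial := by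
      rw [h0]; push_cast; ring
    have h2 : ((2*(n+1)).factorial : ℚ) ≠ 0 := by positivity
    rw [h1]
    field_simp
    ring

lemma hCder : 2 * (d⁄dX ℚ Cser) = Sser := by
  ext n
  rw [two_mul, map_add, coeff_derivative, coeff_Cser, coeff_Sser]
  have h0 : (2*(n+1)).factorial = (2*n+2) * (2*n+1).factorial := by
    rw [show 2*(n+1) = (2*n+1) + 1 by ring, Nat.factorial_succ]
  have h1 : ((2*(n+1)).factorial : ℚ) = (2*n+2) * (2*n+1).factorial := by
    rw [h0]; push_cast; ring
  have h2 : ((2*n+1).factorial : ℚ) ≠ 0 := by positivity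
  rw [h1]
  field_simp
  ring

lemma hC2 : Cser ^ 2 = 1 + X * Sser ^ 2 := by
  apply derivative.ext
  · rw [map_add, Derivation.map_one_eq_zero]
    rw [Derivation.leibniz (d⁄dX ℚ) X (Sser^2)]
    rw [Derivation.leibniz_pow, Derivation.leibniz_pow, derivative_X]
    simp only [smul_eq_mul, nsmul_eq_mul]
    push_cast
    linear_combination Cser * hCder - Sser * hSder
  · simp [map_pow, constCoeff_Cser, map_add, map_mul, constantCoeff_X]

lemma key (j : ℕ) (hj : 0 < j) : coeff j (Cser * (Sser⁻¹) ^ (2 * j + 1)) = 0 := by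
  obtain ⟨i, rfl⟩ : ∃ i, j = i + 1 := ⟨j - 1, (Nat.succ_pred_eq_of_pos hj).symm⟩
  have E : ((i:ℚ)+1) • (Cser * (Sser⁻¹) ^ (2 * (i+1) + 1)) =
      ((i:ℚ)+1) • (Sser⁻¹) ^ (2 * (i+1)) - X * d⁄dX ℚ ((Sser⁻¹) ^ (2 * (i+1))) := by
    rw [Derivation.leibniz_pow, derivative_inv', show 2*(i+1)-1 = 2*i+1 from by omega]
    simp only [smul_eq_mul, nsmul_eq_mul, PowerSeries.smul_eq_C_mul, map_add, map_natCast,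
      map_one]
    push_cast
    linear_combination (-(((i:ℚ⟦X⟧))+1) * (Sser⁻¹)^(2*i+3)) * hSder
      + ((((i:ℚ⟦X⟧))+1) * (Sser⁻¹)^(2*i+2)) * Sser_inv_mul
  have E2 := congrArg (coeff (i+1)) E
  simp only [map_smul, map_sub, coeff_succ_X_mul, coeff_derivative, smul_eq_mul] at E2
  have hne : ((i:ℚ)+1) ≠ 0 := by positivity
  have h0 : ((i:ℚ)+1) * coeff (i+1) (Cser * (Sser⁻¹) ^ (2 * (i+1) + 1)) = 0 := by
    linear_combination E2
  exact (mul_eq_zero.mp h0).resolve_left hne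

theorem signature_projective_space (m : ℕ) (hm : 0 < m) :
    coeff m (Hser ^ (2 * m + 1)) = 1 := by
  have h1 : Hser ^ (2 * m + 1) =
      ∑ k ∈ Finset.range (m + 1),
        (X ^ k * (Sser ^ 2) ^ k * 1 ^ (m - k) * (m.choose k : ℚ⟦X⟧)) *
          (Cser * (Sser⁻¹) ^ (2 * m + 1)) := by
    rw [Hser, mul_pow, pow_succ Cser (2 * m),
      pow_mul Cser 2 m, hC2, add_comm (1 : ℚ⟦X⟧) (X * Sser ^ 2), add_pow, Finset.sum_mul,
      Finset.sum_mul]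
    apply Finset.sum_congr rfl
    intro k _
    rw [mul_pow X (Sser ^ 2) k]
    ring
  rw [h1, map_sum]
  rw [Finset.sum_eq_single m]
  · -- k = m term
    have hsplit : (Sser⁻¹) ^ (2 * m + 1) = (Sser⁻¹) ^ (2 * m) * Sser⁻¹ := by
      rw [← pow_succ]
    have hcancel : (Sser ^ 2) ^ m * (Sser⁻¹) ^ (2 * m) = 1 := by
      rw [← pow_mul, ← mul_pow, mul_comm Sser Sser⁻¹, Sser_inv_mul, one_pow]
    have e1 : (X ^ m * (Sser ^ 2) ^ m * 1 ^ (m - m) * (m.choose m : ℚ⟦X⟧)) *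
        (Cser * (Sser⁻¹) ^ (2 * m + 1)) = X ^ m * (Cser * Sser⁻¹) := by
      rw [Nat.choose_self, hsplit]
      push_cast
      linear_combination (X ^ m * Cser * Sser⁻¹) * hcancel
    rw [e1, coeff_X_pow_mul', if_pos le_rfl, Nat.sub_self,
      coeff_zero_eq_constantCoeff, map_mul, constCoeff_Cser, constantCoeff_inv,
      constCoeff_Sser]
    norm_num
  · -- k ≠ m terms vanish
    intro k hk hkm
    have hklt : k < m := by
      have := Finset.mem_range.mp hk; omega
    have hsplit : (Sser⁻¹) ^ (2 * m + 1) =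
        (Sser⁻¹) ^ (2 * k) * (Sser⁻¹) ^ (2 * (m - k) + 1) := by
      rw [← pow_add]; congr 1; omega
    have hcancel : (Sser ^ 2) ^ k * (Sser⁻¹) ^ (2 * k) = 1 := by
      rw [← pow_mul, ← mul_pow, mul_comm Sser Sser⁻¹, Sser_inv_mul, one_pow]
    have e1 : (X ^ k * (Sser ^ 2) ^ k * 1 ^ (m - k) * (m.choose k : ℚ⟦X⟧)) *
        (Cser * (Sser⁻¹) ^ (2 * m + 1)) =
        C (m.choose k : ℚ) * (X ^ k * (Cser * (Sser⁻¹) ^ (2 * (m - k) + 1))) := by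
      rw [hsplit, map_natCast]
      linear_combination ((m.choose k : ℚ⟦X⟧) * X ^ k * Cser *
        (Sser⁻¹) ^ (2 * (m - k) + 1)) * hcancel
    rw [e1, coeff_C_mul, coeff_X_pow_mul', if_pos hklt.le,
      key (m - k) (by omega), mul_zero]
  · intro h
    exact absurd (Finset.self_mem_range_succ m) h
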